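/- There exists a constant c > 0 such that for every integer d ≥ 1 and every real polynomial p of degree at most d with p(0) = 1, one has ∫ p(x)² dγ(x) ≥ c/√d, where γ is the standard Gaussian measure N(0,1) on ℝ. -/

import Mathlib

open MeasureTheory ProbabilityTheory Polynomial Finset Real
open scoped Nat

noncomputable def mom (n : ℕ) : ℝ := ∫ x : ℝ, x ^ n * Real.exp (-x^2/2)

lemma ipe (n : ℕ) : Integrable (fun x : ℝ => x ^ n * Real.exp (-x^2/2)) := by
  have h := integrable_rpow_mul_exp_neg_mul_sq (b := 1/2) (s := (n:ℝ)) (by norm_num)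
      (lt_of_lt_of_le (by norm_num) n.cast_nonneg)
  refine h.congr ?_
  filter_upwards with x
  rw [Real.rpow_natCast, show -(1/2 : ℝ)*x^2 = -x^2/2 by ring]

lemma mom_zero : mom 0 = Real.sqrt (2 * Real.pi) := by
  have h := integral_gaussian (1/2)
  simp only [mom, pow_zero, one_mul]
  rw [show (fun x : ℝ => Real.exp (-x^2/2)) = fun x : ℝ => Real.exp (-(1/2) * x^2) by
    funext x; ring_nf]
  rw [h, div_div_eq_mul_div, div_one, mul_comm]

lemma exp_hasDeriv (x : ℝ) : HasDerivAt (fun y : ℝ => Real.exp (-y^2/2)) (-x * Real.exp (-x^2/2)) x := by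
  have h1 : HasDerivAt (fun y : ℝ => -y^2/2) (-x) x := by
    have := ((hasDerivAt_pow 2 x).neg).div_const 2
    refine this.congr_deriv ?_; push_cast; ring
  have := h1.exp
  convert this using 1; ring

lemma mom_one : mom 1 = 0 := by
  have hd : ∀ x : ℝ, HasDerivAt (fun y : ℝ => -Real.exp (-y^2/2)) (x ^ 1 * Real.exp (-x^2/2)) x := by
    intro x
    have := (exp_hasDeriv x).neg
    refine this.congr_deriv ?_; ring
  have h0 := integral_eq_zero_of_hasDerivAt_of_integrable hd (ipe 1)
    (((ipe 0).congr ?_).neg)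
  · exact h0
  · filter_upwards with x; simp

lemma mom_rec (n : ℕ) : mom (n + 2) = (n + 1) * mom n := by
  have hd : ∀ x : ℝ, HasDerivAt (fun x : ℝ => x ^ (n+1) * Real.exp (-x^2/2))
      (((n:ℝ)+1) * x ^ n * Real.exp (-x^2/2) - x ^ (n+2) * Real.exp (-x^2/2)) x := by
    intro x
    have h1 := (hasDerivAt_pow (n+1) x).mul (exp_hasDeriv x)
    refine h1.congr_deriv ?_
    push_cast
    ring
  have hint : Integrable (fun x : ℝ =>
      ((n:ℝ)+1) * x ^ n * Real.exp (-x^2/2) - x ^ (n+2) * Real.exp (-x^2/2)) := by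
    have := ((ipe n).const_mul ((n:ℝ)+1)).sub (ipe (n+2))
    refine this.congr ?_
    filter_upwards with x
    simp only [Pi.sub_apply]
    ring
  have h0 := integral_eq_zero_of_hasDerivAt_of_integrable hd hint (ipe (n+1))
  have hsplit : ∫ x : ℝ, (((n:ℝ)+1) * x ^ n * Real.exp (-x^2/2) - x ^ (n+2) * Real.exp (-x^2/2))
      = ((n:ℝ)+1) * mom n - mom (n+2) := by
    rw [integral_sub (((ipe n).const_mul ((n:ℝ)+1)).congr (by filter_upwards with x; ring)) (ipe (n+2))]
    unfold mom
    congr 1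
    rw [← MeasureTheory.integral_const_mul]
    congr 1; funext x; ring
  rw [hsplit] at h0
  linarith

lemma mom_odd (s : ℕ) : mom (2 * s + 1) = 0 := by
  induction s with
  | zero => simpa using mom_one
  | succ s ih =>
      have h : 2 * (s+1) + 1 = (2*s+1) + 2 := by ring
      rw [h, mom_rec, ih, mul_zero]

noncomputable def E : ℕ → ℝ
  | 0 => 1
  | s + 1 => (2 * s + 1) * E s

lemma mom_even (s : ℕ) : mom (2 * s) = Real.sqrt (2 * Real.pi) * E s := by
  induction s with
  | zero => simpa [E] using mom_zero
  | succ s ih =>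
      have h : 2 * (s+1) = 2*s + 2 := by ring
      rw [h, mom_rec, ih, E]
      push_cast
      ring

noncomputable def pint (q : Polynomial ℝ) (n : ℕ) : ℝ :=
  ∫ x : ℝ, x ^ n * q.eval x * Real.exp (-x^2/2)

lemma expand_aux (q : Polynomial ℝ) (n N : ℕ) (hN : q.natDegree < N) :
    (fun x : ℝ => x ^ n * q.eval x * Real.exp (-x^2/2))
      = fun x : ℝ => ∑ k ∈ range N, q.coeff k * (x ^ (n+k) * Real.exp (-x^2/2)) := by
  funext x
  rw [eval_eq_sum_range' hN x, Finset.mul_sum, Finset.sum_mul]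
  refine Finset.sum_congr rfl fun k _ => ?_
  ring

lemma ipq (q : Polynomial ℝ) (n : ℕ) :
    Integrable (fun x : ℝ => x ^ n * q.eval x * Real.exp (-x^2/2)) := by
  rw [expand_aux q n (q.natDegree + 1) (Nat.lt_succ_self _)]
  exact integrable_finset_sum _ (fun k _ => (ipe (n+k)).const_mul _)

lemma pint_eq (q : Polynomial ℝ) (n N : ℕ) (hN : q.natDegree < N) :
    pint q n = ∑ k ∈ range N, q.coeff k * mom (n + k) := by
  unfold pint
  rw [expand_aux q n N hN, integral_finset_sum _ (fun k _ => (ipe (n+k)).const_mul _)]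
  exact Finset.sum_congr rfl fun k _ => MeasureTheory.integral_const_mul _ _

lemma star0 (q : Polynomial ℝ) : pint q 1 = pint (derivative q) 0 := by
  have hd : ∀ x : ℝ, HasDerivAt (fun x : ℝ => q.eval x * Real.exp (-x^2/2))
      (x ^ 0 * (derivative q).eval x * Real.exp (-x^2/2)
        - x ^ 1 * q.eval x * Real.exp (-x^2/2)) x := by
    intro x
    have h1 := (q.hasDerivAt x).mul (exp_hasDeriv x)
    refine h1.congr_deriv ?_
    simp only [pow_zero, pow_one]
    ring
  have h0 := integral_eq_zero_of_hasDerivAt_of_integrable hd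
    ((ipq (derivative q) 0).sub (ipq q 1))
    ((ipq q 0).congr (by filter_upwards with x; rw [pow_zero, one_mul]))
  have hi : (∫ x : ℝ, (x ^ 0 * (derivative q).eval x * Real.exp (-x^2/2)
      - x ^ 1 * q.eval x * Real.exp (-x^2/2)))
      = (∫ x : ℝ, x ^ 0 * (derivative q).eval x * Real.exp (-x^2/2))
        - ∫ x : ℝ, x ^ 1 * q.eval x * Real.exp (-x^2/2) :=
    integral_sub (ipq (derivative q) 0) (ipq q 1)
  rw [hi] at h0
  unfold pint
  linarith

lemma star (q : Polynomial ℝ) (n : ℕ) :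
    pint q (n+2) = ((n:ℝ)+1) * pint q n + pint (derivative q) (n+1) := by
  have hd : ∀ x : ℝ, HasDerivAt (fun x : ℝ => x ^ (n+1) * q.eval x * Real.exp (-x^2/2))
      ((((n:ℝ)+1) * (x ^ n * q.eval x * Real.exp (-x^2/2))
        + x ^ (n+1) * (derivative q).eval x * Real.exp (-x^2/2))
        - x ^ (n+2) * q.eval x * Real.exp (-x^2/2)) x := by
    intro x
    have h1 := ((hasDerivAt_pow (n+1) x).mul (q.hasDerivAt x)).mul (exp_hasDeriv x)
    refine h1.congr_deriv ?_
    simp only [Pi.mul_apply]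
    push_cast
    ring
  have hA : Integrable (fun x : ℝ => ((n:ℝ)+1) * (x ^ n * q.eval x * Real.exp (-x^2/2))) :=
    (ipq q n).const_mul _
  have hB := ipq (derivative q) (n+1)
  have hC := ipq q (n+2)
  have h0 := integral_eq_zero_of_hasDerivAt_of_integrable hd ((hA.add hB).sub hC) (ipq q (n+1))
  have hi1 : (∫ x : ℝ, (((n:ℝ)+1) * (x ^ n * q.eval x * Real.exp (-x^2/2))
        + x ^ (n+1) * (derivative q).eval x * Real.exp (-x^2/2)
        - x ^ (n+2) * q.eval x * Real.exp (-x^2/2)))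
      = (∫ x : ℝ, (((n:ℝ)+1) * (x ^ n * q.eval x * Real.exp (-x^2/2))
        + x ^ (n+1) * (derivative q).eval x * Real.exp (-x^2/2)))
        - ∫ x : ℝ, x ^ (n+2) * q.eval x * Real.exp (-x^2/2) :=
    integral_sub (hA.add hB) hC
  have hi2 : (∫ x : ℝ, (((n:ℝ)+1) * (x ^ n * q.eval x * Real.exp (-x^2/2))
        + x ^ (n+1) * (derivative q).eval x * Real.exp (-x^2/2)))
      = (∫ x : ℝ, ((n:ℝ)+1) * (x ^ n * q.eval x * Real.exp (-x^2/2)))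
        + ∫ x : ℝ, x ^ (n+1) * (derivative q).eval x * Real.exp (-x^2/2) :=
    integral_add hA hB
  rw [hi1, hi2, MeasureTheory.integral_const_mul] at h0
  unfold pint
  linarith

noncomputable def HP (m : ℕ) : Polynomial ℝ := (Polynomial.hermite m).map (Int.castRingHom ℝ)

lemma HP_zero : HP 0 = 1 := by simp [HP]

lemma HP_succ (m : ℕ) : HP (m+1) = X * HP m - derivative (HP m) := by
  unfold HP
  rw [hermite_succ, Polynomial.map_sub, Polynomial.map_mul, Polynomial.map_X,
    Polynomial.derivative_map]

lemma HP_coeff (m k : ℕ) : (HP m).coeff k = ((Polynomial.hermite m).coeff k : ℝ) := by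
  simp [HP, Polynomial.coeff_map]

lemma HP_natDegree (m : ℕ) : (HP m).natDegree = m := by
  rw [HP, natDegree_map_of_leadingCoeff_ne_zero]
  · exact natDegree_hermite
  · simp [leadingCoeff_hermite]

noncomputable def g (m n : ℕ) : ℝ := pint (HP m) n

lemma g_zero (n : ℕ) : g 0 n = mom n := by
  unfold g pint mom
  rw [HP_zero]
  simp

lemma g_succ_zero (m : ℕ) : g (m+1) 0 = 0 := by
  unfold g
  rw [HP_succ]
  -- pint (X * HP m - derivative (HP m)) 0
  have h1 : pint (X * HP m - derivative (HP m)) 0 = pint (HP m) 1 - pint (derivative (HP m)) 0 := by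
    unfold pint
    rw [← integral_sub (ipq (HP m) 1) (ipq (derivative (HP m)) 0)]
    congr 1; funext x
    simp only [eval_sub, eval_mul, eval_X]
    ring
  rw [h1, star0, sub_self]

lemma g_succ_succ (m n : ℕ) : g (m+1) (n+1) = ((n:ℝ)+1) * g m n := by
  unfold g
  rw [HP_succ]
  have h1 : pint (X * HP m - derivative (HP m)) (n+1)
      = pint (HP m) (n+2) - pint (derivative (HP m)) (n+1) := by
    unfold pint
    rw [← integral_sub (ipq (HP m) (n+2)) (ipq (derivative (HP m)) (n+1))]
    congr 1; funext x
    simp only [eval_sub, eval_mul, eval_X]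
    ring
  rw [h1, star]
  ring

lemma g_vanish : ∀ n m : ℕ, n < m → g m n = 0 := by
  intro n
  induction n with
  | zero =>
      intro m hm
      obtain ⟨m', rfl⟩ := Nat.exists_eq_succ_of_ne_zero (by omega : m ≠ 0)
      exact g_succ_zero m'
  | succ n ih =>
      intro m hm
      obtain ⟨m', rfl⟩ := Nat.exists_eq_succ_of_ne_zero (by omega : m ≠ 0)
      rw [g_succ_succ, ih m' (by omega), mul_zero]

lemma g_val : ∀ m t : ℕ, g m (m + t) = ((m + t).descFactorial m : ℝ) * mom t := by
  intro m
  induction m with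
  | zero => intro t; simpa using g_zero t
  | succ m ih =>
      intro t
      have h : m + 1 + t = (m + t) + 1 := by ring
      rw [h, g_succ_succ, ih t]
      have h2 : (m + t + 1).descFactorial (m + 1) = (m + t + 1) * (m + t).descFactorial m :=
        Nat.succ_descFactorial_succ (m + t) m
      rw [h2]
      push_cast
      ring

noncomputable def cR (j : ℕ) : ℝ := (-1)^j / (2^j * (j)!)

noncomputable def Qp (R : ℕ) : Polynomial ℝ := ∑ j ∈ range (R+1), C (cR j) * HP (2*j)

lemma E_pos (s : ℕ) : 0 < E s := by
  induction s with
  | zero => norm_num [E]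
  | succ s ih => rw [E]; positivity

lemma E_fact (s : ℕ) : E s * (2^s * (s)!) = ((2*s)! : ℝ) := by
  induction s with
  | zero => norm_num [E]
  | succ s ih =>
      have h1 : ((2*(s+1))! : ℝ) = ((2*(s:ℝ))+2) * (((2*(s:ℝ))+1) * ((2*s)! : ℝ)) := by
        rw [show 2*(s+1) = (2*s)+1+1 from by ring, Nat.factorial_succ, Nat.factorial_succ]
        push_cast
        ring
      rw [h1, E, Nat.factorial_succ, pow_succ]
      push_cast
      linear_combination ((2*(s:ℝ)+1) * ((s:ℝ)+1) * 2) * ih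

lemma Qp_natDegree (R : ℕ) : (Qp R).natDegree ≤ 2*R := by
  unfold Qp
  refine (natDegree_sum_le _ _).trans ?_
  rw [Finset.fold_max_le]
  refine ⟨Nat.zero_le _, fun j hj => ?_⟩
  simp only [Function.comp_apply, mem_range] at hj ⊢
  exact (natDegree_C_mul_le _ _).trans (by rw [HP_natDegree]; omega)

lemma pintQ (R n : ℕ) : pint (Qp R) n = ∑ j ∈ range (R+1), cR j * g (2*j) n := by
  unfold pint g
  rw [show (fun x : ℝ => x ^ n * (Qp R).eval x * Real.exp (-x^2/2))
      = fun x : ℝ => ∑ j ∈ range (R+1), cR j * (x ^ n * (HP (2*j)).eval x * Real.exp (-x^2/2)) by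
    funext x
    unfold Qp
    rw [eval_finset_sum, Finset.mul_sum, Finset.sum_mul]
    exact sum_congr rfl fun j _ => by rw [eval_mul, eval_C]; ring]
  rw [integral_finset_sum _ (fun j _ => (ipq (HP (2*j)) n).const_mul _)]
  exact sum_congr rfl fun j _ => MeasureTheory.integral_const_mul _ _

lemma even_case (R r : ℕ) (hr : r ≤ R) :
    pint (Qp R) (2*r) = if r = 0 then Real.sqrt (2*Real.pi) else 0 := by
  rw [pintQ]
  have hsub : ∑ j ∈ range (R+1), cR j * g (2*j) (2*r)
      = ∑ j ∈ range (r+1), cR j * g (2*j) (2*r) := by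
    symm
    apply Finset.sum_subset
    · intro j hj; simp only [mem_range] at *; omega
    · intro j hj hj2
      simp only [mem_range] at hj hj2
      rw [g_vanish (2*r) (2*j) (by omega), mul_zero]
  rw [hsub]
  have hterm : ∀ j ∈ range (r+1), cR j * g (2*j) (2*r)
      = Real.sqrt (2*Real.pi) / (2^r * (r)!) * ((-1)^j * (r.choose j) * ((2*r)! : ℝ)) := by
    intro j hj
    simp only [mem_range] at hj
    obtain ⟨s, rfl⟩ : ∃ s, r = j + s := ⟨r - j, by omega⟩
    rw [show 2*(j+s) = 2*j + 2*s from by ring, g_val, mom_even]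
    have hd' : (((2*j+2*s).descFactorial (2*j) : ℕ) : ℝ) = ((2*j+2*s)! : ℝ) / ((2*s)! : ℝ) := by
      rw [eq_div_iff (by positivity)]
      have hdd := Nat.factorial_mul_descFactorial (show 2*j ≤ 2*j+2*s by omega)
      rw [show (2*j+2*s) - 2*j = 2*s from by omega] at hdd
      exact_mod_cast (by rw [mul_comm] at hdd; exact hdd)
    have hE' : E s = ((2*s)! : ℝ) / (2^s * (s)!) := by
      rw [eq_div_iff (by positivity)]
      exact E_fact s
    have hch' : (((j+s).choose j : ℕ) : ℝ) = ((j+s)! : ℝ) / ((j)! * (s)!) := by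
      rw [eq_div_iff (by positivity)]
      have h := Nat.choose_mul_factorial_mul_factorial (show j ≤ j+s by omega)
      rw [show (j+s) - j = s from by omega] at h
      rw [← mul_assoc]
      exact_mod_cast h
    rw [hd', hch', hE']
    unfold cR
    rw [show 2*j+2*s = 2*(j+s) from by ring]
    have h1 : ((2*(j+s))! : ℝ) ≠ 0 := by positivity
    have h2 : ((2*s)! : ℝ) ≠ 0 := by positivity
    have h3 : ((j)! : ℝ) ≠ 0 := by positivity
    have h4 : ((s)! : ℝ) ≠ 0 := by positivity
    have h5 : ((j+s)! : ℝ) ≠ 0 := by positivity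
    field_simp
    ring
  rw [Finset.sum_congr rfl hterm, ← Finset.mul_sum]
  have halt : ∑ j ∈ range (r+1), ((-1:ℝ)^j * (r.choose j) * ((2*r)! : ℝ))
      = (if r = 0 then 1 else 0) * ((2*r)! : ℝ) := by
    rw [← Finset.sum_mul]
    congr 1
    have := @Int.alternating_sum_range_choose r
    exact_mod_cast congrArg (fun z : ℤ => (z : ℝ)) this
  rw [halt]
  split_ifs with h
  · subst h; simp
  · simp

lemma odd_case (R r : ℕ) : pint (Qp R) (2*r+1) = 0 := by
  rw [pintQ]
  apply Finset.sum_eq_zero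
  intro j hj
  rcases le_or_gt (2*j) (2*r+1) with h | h
  · obtain ⟨s, hs⟩ : ∃ s, 2*r+1 = 2*j + (2*s+1) := ⟨r - j, by omega⟩
    rw [hs, g_val, mom_odd, mul_zero, mul_zero]
  · rw [g_vanish _ _ h, mul_zero]

noncomputable def tseq (j : ℕ) : ℝ := E j / (2^j * (j)!)

lemma tseq_pos (j : ℕ) : 0 < tseq j := div_pos (E_pos j) (by positivity)

lemma tseq_succ (j : ℕ) : tseq (j+1) = (2*(j:ℝ)+1)/(2*(j:ℝ)+2) * tseq j := by
  unfold tseq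
  rw [E, Nat.factorial_succ, pow_succ, div_mul_div_comm,
    div_eq_div_iff (by positivity) (by positivity)]
  push_cast
  ring

lemma tseq_sum (R : ℕ) : ∑ j ∈ range (R+1), tseq j = (2*(R:ℝ)+1) * tseq R := by
  induction R with
  | zero => simp
  | succ R ih =>
      rw [Finset.sum_range_succ, ih, tseq_succ]
      push_cast
      have h3 : (2*(R:ℝ)+2) ≠ 0 := by positivity
      field_simp

lemma tbound (R : ℕ) : Real.sqrt ((R:ℝ)+1) * tseq R ≤ 1 := by
  induction R with
  | zero => simp [tseq, E]
  | succ R ih =>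
      have hkey : (2*(R:ℝ)+1) * Real.sqrt ((R:ℝ)+2) ≤ (2*(R:ℝ)+2) * Real.sqrt ((R:ℝ)+1) := by
        have e1 : (2*(R:ℝ)+1) * Real.sqrt ((R:ℝ)+2)
            = Real.sqrt ((2*(R:ℝ)+1)^2 * ((R:ℝ)+2)) := by
          rw [Real.sqrt_mul (by positivity), Real.sqrt_sq (by positivity)]
        have e2 : (2*(R:ℝ)+2) * Real.sqrt ((R:ℝ)+1)
            = Real.sqrt ((2*(R:ℝ)+2)^2 * ((R:ℝ)+1)) := by
          rw [Real.sqrt_mul (by positivity), Real.sqrt_sq (by positivity)]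
        rw [e1, e2]
        apply Real.sqrt_le_sqrt
        nlinarith [sq_nonneg ((R:ℝ))]
      rw [tseq_succ]
      push_cast
      have h3 : Real.sqrt ((R:ℝ)+1+1) * ((2*(R:ℝ)+1)/(2*(R:ℝ)+2) * tseq R)
          = ((2*(R:ℝ)+1) * Real.sqrt ((R:ℝ)+2)) * tseq R / (2*(R:ℝ)+2) := by
        rw [show (R:ℝ)+1+1 = (R:ℝ)+2 from by ring]
        ring
      rw [h3, div_le_one (by positivity)]
      calc ((2*(R:ℝ)+1) * Real.sqrt ((R:ℝ)+2)) * tseq R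
          ≤ ((2*(R:ℝ)+2) * Real.sqrt ((R:ℝ)+1)) * tseq R :=
            mul_le_mul_of_nonneg_right hkey (tseq_pos _).le
        _ = (2*(R:ℝ)+2) * (Real.sqrt ((R:ℝ)+1) * tseq R) := by ring
        _ ≤ (2*(R:ℝ)+2) * 1 := mul_le_mul_of_nonneg_left ih (by positivity)
        _ = 2*(R:ℝ)+2 := mul_one _

lemma dfact_succ (j : ℕ) : ((2*(j+1)-1)‼ : ℕ) = (2*j+1) * (2*j-1)‼ := by
  cases j with
  | zero => simp [Nat.doubleFactorial]
  | succ j =>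
      have h : 2*(j+1+1)-1 = (2*(j+1)-1)+2 := by omega
      rw [h, Nat.doubleFactorial_add_two, show 2*(j+1)-1+2 = 2*(j+1)+1 from by omega]

lemma Ecast (j : ℕ) : ((2*j-1)‼ : ℝ) = E j := by
  induction j with
  | zero => simp [E, Nat.doubleFactorial]
  | succ j ih => rw [dfact_succ, E, ← ih]; push_cast; ring

lemma Qp_coeff_zero (R : ℕ) : (Qp R).coeff 0 = ∑ j ∈ range (R+1), tseq j := by
  unfold Qp
  rw [finset_sum_coeff]
  refine Finset.sum_congr rfl fun j _ => ?_
  rw [coeff_C_mul, HP_coeff]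
  have h := Polynomial.coeff_hermite_explicit j 0
  rw [add_zero] at h
  rw [h]
  push_cast
  rw [Ecast]
  have hsq : ((-1:ℝ))^j * (-1:ℝ)^j = 1 := by rw [← mul_pow]; norm_num
  unfold cR tseq
  rw [Nat.choose_zero_right]
  push_cast
  field_simp
  linear_combination (E j) * hsq

lemma pint_add (q1 q2 : Polynomial ℝ) (n : ℕ) :
    pint (q1 + q2) n = pint q1 n + pint q2 n := by
  unfold pint
  rw [← integral_add (ipq q1 n) (ipq q2 n)]
  congr 1; funext x
  rw [eval_add]; ring

lemma pint_Cmul (a : ℝ) (q : Polynomial ℝ) (n : ℕ) :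
    pint (C a * q) n = a * pint q n := by
  unfold pint
  rw [← MeasureTheory.integral_const_mul]
  congr 1; funext x
  rw [eval_mul, eval_C]; ring

lemma pint_sq_nonneg (q : Polynomial ℝ) : 0 ≤ pint (q * q) 0 := by
  unfold pint
  apply integral_nonneg
  intro x
  simp only [pow_zero, one_mul, eval_mul]
  exact mul_nonneg (mul_self_nonneg _) (Real.exp_nonneg _)

lemma pint_mul_expand (p q : Polynomial ℝ) (N : ℕ) (hN : p.natDegree < N) :
    pint (p * q) 0 = ∑ n ∈ range N, p.coeff n * pint q n := by
  unfold pint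
  rw [show (fun x : ℝ => x ^ 0 * (p*q).eval x * Real.exp (-x^2/2))
      = fun x : ℝ => ∑ n ∈ range N, p.coeff n * (x ^ n * q.eval x * Real.exp (-x^2/2)) by
    funext x
    rw [pow_zero, one_mul, eval_mul, eval_eq_sum_range' hN x, Finset.sum_mul, Finset.sum_mul]
    exact sum_congr rfl fun n _ => by ring]
  rw [integral_finset_sum _ (fun n _ => (ipq q n).const_mul _)]
  exact sum_congr rfl fun n _ => MeasureTheory.integral_const_mul _ _

lemma gauss_int (f : ℝ → ℝ) :
    ∫ x, f x ∂(gaussianReal 0 1)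
      = (Real.sqrt (2*Real.pi))⁻¹ * ∫ x : ℝ, f x * Real.exp (-x^2/2) := by
  rw [gaussianReal_of_var_ne_zero 0 one_ne_zero]
  have h1 : (volume.withDensity (gaussianPDF 0 1))
      = volume.withDensity (fun x => (((gaussianPDFReal 0 1 x).toNNReal : NNReal) : ENNReal)) := rfl
  rw [h1, integral_withDensity_eq_integral_smul
    ((measurable_gaussianPDFReal 0 1).real_toNNReal) f]
  rw [show (fun x : ℝ => (gaussianPDFReal 0 1 x).toNNReal • f x)
      = fun x : ℝ => (Real.sqrt (2*Real.pi))⁻¹ * (f x * Real.exp (-x^2/2)) by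
    funext x
    rw [NNReal.smul_def, smul_eq_mul,
      Real.coe_toNNReal _ (gaussianPDFReal_nonneg 0 1 x)]
    rw [gaussianPDFReal_def]
    push_cast
    rw [mul_one, sub_zero]
    ring_nf]
  exact MeasureTheory.integral_const_mul _ _

theorem stmt_9 :
    ∃ c : ℝ, 0 < c ∧
      ∀ d : ℕ, 1 ≤ d →
        ∀ p : Polynomial ℝ, p.natDegree ≤ d → p.eval 0 = 1 →
          c / Real.sqrt d ≤ ∫ x, (p.eval x) ^ 2 ∂(gaussianReal 0 1) := by
  refine ⟨1/3, by norm_num, fun d hd p hdeg hval => ?_⟩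
  set R := d / 2 with hR
  set Q := Qp R with hQ
  set s2 := Real.sqrt (2*Real.pi) with hs2
  have hs2pos : 0 < s2 := Real.sqrt_pos.mpr (by positivity)
  have hs2sq : s2 ^ 2 = 2*Real.pi := Real.sq_sqrt (by positivity)
  -- delta property
  have hdelta : ∀ n : ℕ, n ≤ d → pint Q n = if n = 0 then s2 else 0 := by
    intro n hn
    rcases Nat.even_or_odd n with ⟨r, hr⟩ | ⟨r, hr⟩
    · have h2r : n = 2*r := by omega
      subst h2r
      rw [even_case R r (by omega)]
      by_cases h : r = 0
      · subst h; norm_num [hs2]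
      · rw [if_neg h, if_neg (by omega)]
    · subst hr
      rw [odd_case, if_neg (by omega)]
  -- B
  have hB : pint (p * Q) 0 = s2 := by
    rw [pint_mul_expand p Q (d+1) (by omega)]
    rw [Finset.sum_eq_single 0]
    · rw [hdelta 0 (by omega), if_pos rfl, coeff_zero_eq_eval_zero, hval, one_mul]
    · intro n hn hn0
      rw [hdelta n (by simp only [mem_range] at hn; omega), if_neg hn0, mul_zero]
    · intro h; exact absurd (mem_range.mpr (by omega)) h
  -- C
  have hQdeg : Q.natDegree < d + 1 := by
    rw [hQ]
    have h1 := Qp_natDegree R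
    omega
  have hC : pint (Q * Q) 0 = Q.coeff 0 * s2 := by
    rw [pint_mul_expand Q Q (d+1) hQdeg]
    rw [Finset.sum_eq_single 0]
    · rw [hdelta 0 (by omega), if_pos rfl]
    · intro n hn hn0
      rw [hdelta n (by simp only [mem_range] at hn; omega), if_neg hn0, mul_zero]
    · intro h; exact absurd (mem_range.mpr (by omega)) h
  -- Q coeff 0 value and bounds
  have hQ0sum : Q.coeff 0 = (2*(R:ℝ)+1) * tseq R := by rw [hQ, Qp_coeff_zero, tseq_sum]
  have hQ0pos : 0 < Q.coeff 0 := by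
    rw [hQ0sum]
    have := tseq_pos R
    positivity
  -- Cauchy-Schwarz
  set A := pint (p * p) 0 with hA
  set B := pint (p * Q) 0 with hBB
  set Cc := pint (Q * Q) 0 with hCC
  have hCS : B * B ≤ Cc * A := by
    have h0 := pint_sq_nonneg (C Cc * p - C B * Q)
    have hpoly : (C Cc * p - C B * Q) * (C Cc * p - C B * Q)
        = C (Cc*Cc) * (p*p) + (C (-(Cc*B)) * (p*Q) + (C (-(Cc*B)) * (p*Q) + C (B*B) * (Q*Q))) := by
      simp only [C_mul, C_neg]
      ring
    rw [hpoly, pint_add, pint_add, pint_add, pint_Cmul, pint_Cmul, pint_Cmul] at h0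
    rw [← hA, ← hBB, ← hCC] at h0
    have hCpos : 0 < Cc := by rw [hC]; positivity
    nlinarith [h0, hCpos]
  -- transfer
  have hpint_eq : A = ∫ x : ℝ, (p.eval x)^2 * Real.exp (-x^2/2) := by
    rw [hA]
    unfold pint
    congr 1; funext x
    rw [pow_zero, one_mul, eval_mul]; ring
  have htrans : ∫ x, (p.eval x) ^ 2 ∂(gaussianReal 0 1) = s2⁻¹ * A := by
    rw [hpint_eq, hs2]
    exact gauss_int (fun x => (p.eval x)^2)
  rw [htrans]
  -- A ≥ s2 / Q.coeff 0
  have hAlow : s2 / Q.coeff 0 ≤ A := by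
    rw [div_le_iff₀ hQ0pos]
    have hkey : s2 * s2 ≤ (Q.coeff 0 * s2) * A := by
      rw [← hC]
      calc s2 * s2 = B * B := by rw [hB]
        _ ≤ Cc * A := hCS
    nlinarith [hkey, hs2pos]
  have hmain : 1 / Q.coeff 0 ≤ s2⁻¹ * A := by
    have h := mul_le_mul_of_nonneg_left hAlow (inv_nonneg.mpr hs2pos.le)
    rwa [show s2⁻¹ * (s2/Q.coeff 0) = 1/Q.coeff 0 from by
      field_simp] at h
  -- numeric chain
  have hsRpos : (0:ℝ) < Real.sqrt ((R:ℝ)+1) := Real.sqrt_pos.mpr (by positivity)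
  have hdpos : (0:ℝ) < Real.sqrt d := Real.sqrt_pos.mpr (by exact_mod_cast hd)
  have htle : tseq R ≤ 1 / Real.sqrt ((R:ℝ)+1) := by
    rw [le_div_iff₀ hsRpos]
    have := tbound R
    linarith
  have hQ0le : Q.coeff 0 ≤ (2*(R:ℝ)+1) / Real.sqrt ((R:ℝ)+1) := by
    rw [hQ0sum, show (2*(R:ℝ)+1)/Real.sqrt ((R:ℝ)+1)
      = (2*(R:ℝ)+1) * (1/Real.sqrt ((R:ℝ)+1)) from by ring]
    exact mul_le_mul_of_nonneg_left htle (by positivity)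
  have hstep : Real.sqrt ((R:ℝ)+1) / (2*(R:ℝ)+1) ≤ 1 / Q.coeff 0 := by
    have h := one_div_le_one_div_of_le hQ0pos hQ0le
    rwa [one_div_div] at h
  have hnum : (1/3 : ℝ) / Real.sqrt d ≤ Real.sqrt ((R:ℝ)+1) / (2*(R:ℝ)+1) := by
    rw [div_le_div_iff₀ hdpos (by positivity)]
    have hd1 : (1:ℝ) ≤ d := by exact_mod_cast hd
    have f1 : (2*(R:ℝ)) ≤ d := by
      have : 2*R ≤ d := by omega
      exact_mod_cast this
    have f2 : (d:ℝ) ≤ 2*(R:ℝ)+1 := by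
      have : d ≤ 2*R+1 := by omega
      exact_mod_cast this
    calc (1/3 : ℝ) * (2*(R:ℝ)+1) ≤ Real.sqrt (((R:ℝ)+1) * d) := by
          rw [Real.le_sqrt (by positivity) (by positivity)]
          have f3 : (2*(R:ℝ)) * ((R:ℝ)+1) ≤ (d:ℝ) * ((R:ℝ)+1) :=
            mul_le_mul_of_nonneg_right f1 (by positivity)
          have f4 : ((R:ℝ)+1) * 1 ≤ ((R:ℝ)+1) * d :=
            mul_le_mul_of_nonneg_left hd1 (by positivity)
          nlinarith [f3, f4]
      _ = Real.sqrt ((R:ℝ)+1) * Real.sqrt d := Real.sqrt_mul (by positivity) _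
  calc (1/3 : ℝ) / Real.sqrt d ≤ Real.sqrt ((R:ℝ)+1) / (2*(R:ℝ)+1) := hnum
    _ ≤ 1 / Q.coeff 0 := hstep
    _ ≤ s2⁻¹ * A := hmain
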